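/- Let d ∈ ℕ with d ≥ 1, let Δ > 0, ε > 0, and let a, a' ∈ ℝ^d satisfy ‖a − a'‖₁ ≤ Δ, where ‖x‖₁ = Σ_{i=1}^d |x_i|. For c ∈ ℝ^d let μ_c be the measure on ℝ^d with density x ↦ (ε/(2Δ))^d · exp(−ε‖x − c‖₁/Δ) with respect to d-dimensional Lebesgue measure. Then μ_a and μ_{a'} are probability measures and for every Lebesgue-measurable set S ⊆ ℝ^d, μ_a(S) ≤ e^ε · μ_{a'}(S). -/

import Mathlib

open MeasureTheory Real
open scoped ENNReal BigOperators

/-- The `d`-dimensional Laplace mechanism: the measure on `ℝ^d` with density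
`x ↦ (ε/(2Δ))^d · exp(−ε‖x−c‖₁/Δ)` with respect to `d`-dimensional Lebesgue measure. -/
noncomputable def laplaceMechanism (d : ℕ) (ε Δ : ℝ) (c : Fin d → ℝ) :
    Measure (Fin d → ℝ) :=
  volume.withDensity fun x =>
    ENNReal.ofReal ((ε / (2 * Δ))^d * Real.exp (-(ε * (∑ i, |x i - c i|) / Δ)))

lemma integrable_exp_neg_mul_abs {b : ℝ} (hb : 0 < b) :
    Integrable (fun t : ℝ => Real.exp (-(b * |t|))) := by
  have h1 : IntegrableOn (fun t : ℝ => Real.exp (-(b * |t|))) (Set.Ioi 0) := by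
    refine (exp_neg_integrableOn_Ioi 0 hb).congr_fun (fun x hx => ?_) measurableSet_Ioi
    rw [abs_of_pos hx]; ring_nf
  have h2 : IntegrableOn (fun t : ℝ => Real.exp (-(b * |t|))) (Set.Iic 0) := by
    rw [show (volume : Measure ℝ) = Measure.map Neg.neg volume from
      (Measure.map_neg_eq_self (volume : Measure ℝ)).symm]
    have m : MeasurableEmbedding fun x : ℝ => -x :=
      (Homeomorph.neg ℝ).isClosedEmbedding.measurableEmbedding
    rw [m.integrableOn_map_iff]
    simp only [Function.comp_def, abs_neg, Set.neg_preimage, Set.neg_Iic, neg_zero]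
    exact Iff.mpr integrableOn_Ici_iff_integrableOn_Ioi h1
  have := h2.union h1
  rwa [Set.Iic_union_Ioi, integrableOn_univ] at this

lemma integral_exp_neg_mul_abs {b : ℝ} (hb : 0 < b) :
    (∫ t : ℝ, Real.exp (-(b * |t|))) = 2 / b := by
  rw [integral_comp_abs (f := fun t => Real.exp (-(b * t)))]
  have : ∫ x : ℝ in Set.Ioi 0, Real.exp (-(b * x)) = b⁻¹ * Real.exp (-(b * 0)) := by
    have := integral_comp_mul_left_Ioi (g := fun u => Real.exp (-u)) 0 hb
    simp only [smul_eq_mul] at this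
    rw [this, integral_exp_neg_Ioi]
  rw [this]
  rw [mul_zero, neg_zero, Real.exp_zero]
  field_simp

lemma laplace_one_dim_integrable {b k : ℝ} (hb : 0 < b) (c : ℝ) :
    Integrable (fun t : ℝ => k * Real.exp (-(b * |t - c|))) :=
  (((integrable_exp_neg_mul_abs hb).comp_sub_right c)).const_mul k

lemma laplace_one_dim_integral {b k : ℝ} (hb : 0 < b) (c : ℝ) :
    (∫ t : ℝ, k * Real.exp (-(b * |t - c|))) = k * (2 / b) := by
  rw [MeasureTheory.integral_const_mul]
  rw [integral_sub_right_eq_self (μ := volume) (fun t => Real.exp (-(b * |t|))) c]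
  rw [integral_exp_neg_mul_abs hb]

lemma laplace_density_prod (d : ℕ) (Δ ε : ℝ) (hΔ : 0 < Δ) (c : Fin d → ℝ)
    (x : Fin d → ℝ) :
    (ε / (2 * Δ))^d * Real.exp (-(ε * (∑ i, |x i - c i|) / Δ)) =
      ∏ i, (ε / (2 * Δ)) * Real.exp (-(ε / Δ * |x i - c i|)) := by
  rw [Finset.prod_mul_distrib, Finset.prod_const, Finset.card_univ, Fintype.card_fin,
    ← Real.exp_sum]
  congr 1
  rw [Finset.mul_sum, Finset.sum_div, ← Finset.sum_neg_distrib]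
  congr 1
  exact Finset.sum_congr rfl fun i _ => by ring

lemma laplace_isProb (d : ℕ) (Δ ε : ℝ) (hΔ : 0 < Δ) (hε : 0 < ε) (c : Fin d → ℝ) :
    IsProbabilityMeasure (laplaceMechanism d ε Δ c) := by
  have hb : 0 < ε / Δ := div_pos hε hΔ
  constructor
  rw [laplaceMechanism, withDensity_apply _ MeasurableSet.univ, Measure.restrict_univ]
  have hdens : ∀ x : Fin d → ℝ,
      (ε / (2 * Δ))^d * Real.exp (-(ε * (∑ i, |x i - c i|) / Δ)) =
        ∏ i, (ε / (2 * Δ)) * Real.exp (-(ε / Δ * |x i - c i|)) :=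
    laplace_density_prod d Δ ε hΔ c
  simp_rw [hdens]
  have hint : Integrable (fun x : Fin d → ℝ =>
      ∏ i, (ε / (2 * Δ)) * Real.exp (-(ε / Δ * |x i - c i|))) :=
    Integrable.fin_nat_prod (𝕜 := ℝ) (fun i => laplace_one_dim_integrable hb (c i))
  have hnn : (0 : (Fin d → ℝ) → ℝ) ≤ᵐ[volume] fun x =>
      ∏ i, (ε / (2 * Δ)) * Real.exp (-(ε / Δ * |x i - c i|)) := by
    filter_upwards with x
    exact Finset.prod_nonneg fun i _ =>
      mul_nonneg (by positivity) (Real.exp_nonneg _)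
  rw [← MeasureTheory.ofReal_integral_eq_lintegral_ofReal hint hnn]
  rw [volume_pi, MeasureTheory.integral_fin_nat_prod_eq_prod (𝕜 := ℝ)
    (fun i (t : ℝ) => (ε / (2 * Δ)) * Real.exp (-(ε / Δ * |t - c i|)))]
  have : ∀ i : Fin d, (∫ t : ℝ, (ε / (2 * Δ)) * Real.exp (-(ε / Δ * |t - c i|))) = 1 := by
    intro i
    rw [laplace_one_dim_integral hb (c i)]
    field_simp
  simp_rw [this]
  simp

/-- The Laplace mechanism is sensitivity-induced `ε`-differentially private:
if `‖a − a'‖₁ ≤ Δ` then the corresponding Laplace measures are probability measures and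
`μ_a(S) ≤ e^ε · μ_{a'}(S)` for every measurable `S`. -/
theorem laplaceMechanism_dp
    (d : ℕ) (hd : 1 ≤ d) (Δ ε : ℝ) (hΔ : 0 < Δ) (hε : 0 < ε)
    (a a' : Fin d → ℝ) (ha : (∑ i, |a i - a' i|) ≤ Δ) :
    IsProbabilityMeasure (laplaceMechanism d ε Δ a) ∧
    IsProbabilityMeasure (laplaceMechanism d ε Δ a') ∧
    ∀ S : Set (Fin d → ℝ), MeasurableSet S →
      laplaceMechanism d ε Δ a S ≤
        ENNReal.ofReal (Real.exp ε) * laplaceMechanism d ε Δ a' S := by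
  refine ⟨laplace_isProb d Δ ε hΔ hε a, laplace_isProb d Δ ε hΔ hε a', ?_⟩
  intro S hS
  rw [laplaceMechanism, laplaceMechanism, withDensity_apply _ hS, withDensity_apply _ hS,
    ← MeasureTheory.lintegral_const_mul' _ _ ENNReal.ofReal_ne_top]
  refine lintegral_mono fun x => ?_
  rw [← ENNReal.ofReal_mul (Real.exp_nonneg ε)]
  refine ENNReal.ofReal_le_ofReal ?_
  rw [mul_left_comm]
  refine mul_le_mul_of_nonneg_left ?_ (by positivity)
  rw [← Real.exp_add]
  refine Real.exp_le_exp.mpr ?_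
  have hsum : (∑ i, |x i - a' i|) ≤ (∑ i, |x i - a i|) + Δ := by
    have h1 : (∑ i, |x i - a' i|) ≤ ∑ i, (|x i - a i| + |a i - a' i|) := by
      refine Finset.sum_le_sum fun i _ => ?_
      have : x i - a' i = (x i - a i) + (a i - a' i) := by ring
      rw [this]; exact abs_add_le _ _
    rw [Finset.sum_add_distrib] at h1
    linarith
  have key : ε * (∑ i, |x i - a' i|) / Δ ≤ ε + ε * (∑ i, |x i - a i|) / Δ := by
    have h3 : ε * (∑ i, |x i - a' i|) / Δ ≤ ε * ((∑ i, |x i - a i|) + Δ) / Δ := by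
      gcongr
    have h4 : ε * ((∑ i, |x i - a i|) + Δ) / Δ = ε + ε * (∑ i, |x i - a i|) / Δ := by
      field_simp; ring
    linarith
  linarith
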